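/- arXiv:1701.06211 — 3 statements merged into one kernel-verified Lean document; each statement's English description precedes it below -/
import Mathlib

section
/- Let μ be a complex Radon measure on ℝ^d that is a tempered distribution, whose Fourier transform is a slowly increasing purely atomic measure μ̂=Σ_{γ∈Γ} b_γ δ_γ with Γ countable. Then for every Schwartz function ψ on ℝ^d the convolution ψ⋆μ belongs to W; more precisely, Σ_{γ∈Γ}|b_γ||ψ̂(γ)|<∞ and (ψ⋆μ)(s) = Σ_{γ∈Γ} b_γ ψ̂(γ) e^{2πi⟨s,γ⟩} for all s∈ℝ^d. -/
open MeasureTheory Metric Complex SchwartzMap Filter Topology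

noncomputable section

abbrev Ed (d : ℕ) := EuclideanSpace ℝ (Fin d)

/-- The exponential `e^{2πi⟨x,γ⟩}`. -/
def e2 {d : ℕ} (x γ : Ed d) : ℂ :=
  Complex.exp (2 * Real.pi * Complex.I * ((inner ℝ x γ : ℝ) : ℂ))

/-- A set is discrete if it meets every unit ball in finitely many points. -/
def DiscreteSet {d : ℕ} (E : Set (Ed d)) : Prop :=
  ∀ x : Ed d, (E ∩ Metric.ball x 1).Finite

/-- A set is uniformly discrete if distinct points are uniformly separated. -/
def UniformlyDiscrete {d : ℕ} (E : Set (Ed d)) : Prop :=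
  ∃ ε > (0 : ℝ), ∀ x ∈ E, ∀ y ∈ E, x ≠ y → ε ≤ dist x y

/-- A full-rank lattice in `ℝ^d` is the image of `ℤ^d` under an invertible linear map. -/
def IsFullRankLattice {d : ℕ} (L : Set (Ed d)) : Prop :=
  ∃ T : Ed d ≃ₗ[ℝ] Ed d, L = T '' {x : Ed d | ∀ i, ∃ m : ℤ, x i = (m : ℝ)}

/-- A relatively dense subset of `ℝ^d`. -/
def RelativelyDense {d : ℕ} (E : Set (Ed d)) : Prop :=
  ∃ R : ℝ, ∀ x : Ed d, ∃ y ∈ E, dist x y ≤ R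

/-- An almost periodic (uniformly) continuous function on `ℝ^d`. -/
def IsAlmostPeriodicFun {d : ℕ} (f : Ed d → ℂ) : Prop :=
  Continuous f ∧ ∀ ε > (0 : ℝ), RelativelyDense {τ : Ed d | ∀ x, ‖f (x + τ) - f x‖ < ε}

/-- A Fourier quasicrystal on `ℝ^d`: an atomic measure `μ = Σ_{λ∈Λ} a_λ δ_λ` with countable
discrete support `Λ`, whose distributional Fourier transform is the atomic measure
`Σ_{γ∈Γ} b_γ δ_γ` with countable spectrum `Γ`, both masses growing at most polynomially. -/
structure FQC (d : ℕ) where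
  Λ : Set (Ed d)
  a : Ed d → ℂ
  Γ : Set (Ed d)
  b : Ed d → ℂ
  Λ_countable : Λ.Countable
  Λ_discrete : DiscreteSet Λ
  Γ_countable : Γ.Countable
  a_ne_zero : ∀ l ∈ Λ, a l ≠ 0
  b_ne_zero : ∀ g ∈ Γ, b g ≠ 0
  growth : ∃ (C : ℝ) (k : ℕ), ∀ r : ℝ, 2 ≤ r →
      Summable (fun l : ↥(Λ ∩ Metric.ball 0 r) => ‖a l.1‖) ∧
      Summable (fun g : ↥(Γ ∩ Metric.ball 0 r) => ‖b g.1‖) ∧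
      (∑' l : ↥(Λ ∩ Metric.ball 0 r), ‖a l.1‖) +
        (∑' g : ↥(Γ ∩ Metric.ball 0 r), ‖b g.1‖) ≤ C * r ^ k
  summable_left : ∀ ψ : 𝓢(Ed d, ℂ),
      Summable (fun l : Λ => a l.1 * fourierTransformCLM ℂ ψ l.1)
  summable_right : ∀ ψ : 𝓢(Ed d, ℂ), Summable (fun g : Γ => b g.1 * ψ g.1)
  fourier_eq : ∀ ψ : 𝓢(Ed d, ℂ),
      (∑' l : Λ, a l.1 * fourierTransformCLM ℂ ψ l.1) = ∑' g : Γ, b g.1 * ψ g.1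

/-- A large Fourier quasicrystal: the masses are bounded away from zero. -/
def FQC.Large {d : ℕ} (μ : FQC d) : Prop :=
  ∃ ε > (0 : ℝ), ∀ l ∈ μ.Λ, ε ≤ ‖μ.a l‖

/-- Translation boundedness of the Fourier transform `μ̂ = Σ_{γ∈Γ} b_γ δ_γ` of a Fourier
quasicrystal: the total variation of every unit ball is uniformly bounded. -/
def FQC.HatTranslationBounded {d : ℕ} (μ : FQC d) : Prop :=
  ∃ C : ℝ, ∀ y : Ed d,
    Summable (fun g : ↥(μ.Γ ∩ Metric.ball y 1) => ‖μ.b g.1‖) ∧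
    (∑' g : ↥(μ.Γ ∩ Metric.ball y 1), ‖μ.b g.1‖) ≤ C

/-- A complex Radon measure on `ℝ^d`, given by its total variation measure `var` (locally
finite) and a density of modulus one. -/
structure CRM (d : ℕ) where
  var : Measure (Ed d)
  density : Ed d → ℂ
  locallyFinite : ∀ x : Ed d, var (Metric.ball x 1) < ⊤
  unit_density : ∀ᵐ x ∂var, ‖density x‖ = 1

/-- Integral of a function against a complex Radon measure. -/
def CRM.integral {d : ℕ} (μ : CRM d) (f : Ed d → ℂ) : ℂ :=
  ∫ x, f x * μ.density x ∂μ.var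

/-- A translation bounded complex Radon measure. -/
def CRM.TranslationBounded {d : ℕ} (μ : CRM d) : Prop :=
  ∃ C : ℝ, ∀ x : Ed d, μ.var (Metric.ball x 1) ≤ ENNReal.ofReal C

/-- A slowly increasing complex Radon measure. -/
def CRM.SlowlyIncreasing {d : ℕ} (μ : CRM d) : Prop :=
  ∃ (C : ℝ) (k : ℕ), ∀ r : ℝ, 1 ≤ r →
    μ.var (Metric.ball 0 r) ≤ ENNReal.ofReal (C * r ^ k)

/-- The measure `μ` acts on Schwartz functions (it is a tempered distribution). -/
def CRM.IsTempered {d : ℕ} (μ : CRM d) : Prop :=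
  ∀ ψ : 𝓢(Ed d, ℂ), Integrable (fun x => ψ x * μ.density x) μ.var

/-- `ν` is the distributional Fourier transform of `μ`: `ν(ψ) = μ(ψ̂)` for Schwartz `ψ`. -/
def CRM.IsFourierTransformOf {d : ℕ} (ν μ : CRM d) : Prop :=
  ∀ ψ : 𝓢(Ed d, ℂ),
    ν.integral (fun x => ψ x) = μ.integral (fun x => fourierTransformCLM ℂ ψ x)

/-- An almost periodic complex Radon measure. -/
def CRM.AlmostPeriodic {d : ℕ} (μ : CRM d) : Prop :=
  ∀ ψ : C(Ed d, ℂ), HasCompactSupport ψ →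
    IsAlmostPeriodicFun (fun x => μ.integral (fun y => ψ (x - y)))

/-- The class `W` of absolutely convergent exponential sums on `ℝ^d`. -/
def MemW {d : ℕ} (f : Ed d → ℂ) : Prop :=
  ∃ (c : ℕ → ℂ) (γ : ℕ → Ed d), Function.Injective γ ∧
    Summable (fun n => ‖c n‖) ∧ ∀ x, HasSum (fun n => c n * e2 x (γ n)) (f x)

/-- The volume of the unit ball in `ℝ^d`. -/
def omegad (d : ℕ) : ℝ := (volume (Metric.ball (0 : Ed d) 1)).toReal

open FourierTransform in
lemma hasTemperateGrowth_add_const {d : ℕ} (s : Ed d) :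
    Function.HasTemperateGrowth (fun x : Ed d => x + s) := by
  apply Function.HasTemperateGrowth.of_fderiv (k := 1) (C := 1 + ‖s‖)
  · have h : (fderiv ℝ fun x : Ed d => x + s) = fun _ => ContinuousLinearMap.id ℝ (Ed d) := by
      funext x
      rw [fderiv_add_const]
      exact fderiv_id
    rw [h]
    exact Function.HasTemperateGrowth.const _
  · exact differentiable_id.add_const s
  · intro x
    have h1 : ‖x + s‖ ≤ ‖x‖ + ‖s‖ := norm_add_le x s
    have h2 : (0:ℝ) ≤ ‖x‖ := norm_nonneg x
    have h3 : (0:ℝ) ≤ ‖s‖ := norm_nonneg s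
    rw [pow_one]
    nlinarith

lemma antilipschitz_add_const {d : ℕ} (s : Ed d) :
    AntilipschitzWith 1 (fun x : Ed d => x + s) :=
  (Isometry.of_dist_eq fun a b => dist_add_right a b s).antilipschitz

/-- key pointwise bound: `2 ^ log₂ ⌊‖x‖⌋ ≤ max 1 ‖x‖`. -/
lemma pow_log_floor_le {d : ℕ} (x : Ed d) :
    (2:ℝ) ^ (Nat.log 2 ⌊‖x‖⌋₊) ≤ max 1 ‖x‖ := by
  rcases Nat.eq_zero_or_pos ⌊‖x‖⌋₊ with h0 | hpos
  · simp [h0]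
  · have h1 : (2:ℕ) ^ (Nat.log 2 ⌊‖x‖⌋₊) ≤ ⌊‖x‖⌋₊ := Nat.pow_log_le_self 2 hpos.ne'
    have h2 : (⌊‖x‖⌋₊ : ℝ) ≤ ‖x‖ := Nat.floor_le (norm_nonneg x)
    calc (2:ℝ) ^ (Nat.log 2 ⌊‖x‖⌋₊) = ((2 ^ (Nat.log 2 ⌊‖x‖⌋₊) : ℕ) : ℝ) := by push_cast; ring
      _ ≤ (⌊‖x‖⌋₊ : ℝ) := by exact_mod_cast h1
      _ ≤ ‖x‖ := h2
      _ ≤ max 1 ‖x‖ := le_max_right _ _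

lemma norm_lt_pow_log_succ {d : ℕ} (x : Ed d) :
    ‖x‖ < (2:ℝ) ^ (Nat.log 2 ⌊‖x‖⌋₊ + 1) := by
  have h1 : ‖x‖ < (⌊‖x‖⌋₊ : ℝ) + 1 := Nat.lt_floor_add_one _
  have h2 : ⌊‖x‖⌋₊ < 2 ^ (Nat.log 2 ⌊‖x‖⌋₊ + 1) :=
    Nat.lt_pow_succ_log_self (by norm_num) _
  have h3 : (⌊‖x‖⌋₊ : ℝ) + 1 ≤ ((2 ^ (Nat.log 2 ⌊‖x‖⌋₊ + 1) : ℕ) : ℝ) := by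
    exact_mod_cast h2
  calc ‖x‖ < (⌊‖x‖⌋₊ : ℝ) + 1 := h1
    _ ≤ ((2 ^ (Nat.log 2 ⌊‖x‖⌋₊ + 1) : ℕ) : ℝ) := h3
    _ = (2:ℝ) ^ (Nat.log 2 ⌊‖x‖⌋₊ + 1) := by push_cast; ring

/-- Lemma 2.5: if `μ` is tempered with slowly increasing purely atomic Fourier transform
`μ̂ = Σ_{γ∈Γ} b_γ δ_γ`, then for every Schwartz `ψ` the convolution `ψ⋆μ` is the absolutely
convergent exponential sum `Σ_γ b_γ ψ̂(γ) e^{2πi⟨s,γ⟩}`. -/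
theorem convolution_in_W {d : ℕ} (μ : CRM d) (hT : μ.IsTempered)
    (Γ : Set (Ed d)) (b : Ed d → ℂ) (hΓ : Γ.Countable)
    (hSI : ∃ (C : ℝ) (k : ℕ), ∀ r : ℝ, 1 ≤ r →
      Summable (fun g : ↥(Γ ∩ Metric.ball 0 r) => ‖b g.1‖) ∧
      (∑' g : ↥(Γ ∩ Metric.ball 0 r), ‖b g.1‖) ≤ C * r ^ k)
    (hsum : ∀ ψ : 𝓢(Ed d, ℂ), Summable (fun g : Γ => b g.1 * ψ g.1))
    (hF : ∀ ψ : 𝓢(Ed d, ℂ),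
      μ.integral (fun x => fourierTransformCLM ℂ ψ x) = ∑' g : Γ, b g.1 * ψ g.1) :
    ∀ ψ : 𝓢(Ed d, ℂ),
      Summable (fun g : Γ => ‖b g.1‖ * ‖fourierTransformCLM ℂ ψ g.1‖) ∧
      ∀ s : Ed d, μ.integral (fun x => ψ (s - x)) =
        ∑' g : Γ, b g.1 * fourierTransformCLM ℂ ψ g.1 * e2 s g.1 := by
  obtain ⟨C, k, hCk⟩ := hSI
  have hC0 : 0 ≤ C := by
    have h1 := (hCk 1 le_rfl).2
    have h2 : (0:ℝ) ≤ ∑' g : ↥(Γ ∩ Metric.ball 0 1), ‖b g.1‖ :=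
      tsum_nonneg fun _ => norm_nonneg _
    simpa using h2.trans h1
  intro ψ
  obtain ⟨M0, hM0pos, hM0⟩ := (fourierTransformCLM ℂ ψ).decay 0 0
  obtain ⟨M1, hM1pos, hM1⟩ := (fourierTransformCLM ℂ ψ).decay (k+1) 0
  set M : ℝ := max M0 M1 with hM
  have hMpos : 0 < M := lt_of_lt_of_le hM0pos (le_max_left _ _)
  -- the pointwise decay bound in dyadic form
  have key : ∀ x : Ed d,
      ‖fourierTransformCLM ℂ ψ x‖ ≤ M * ((1/2:ℝ) ^ (Nat.log 2 ⌊‖x‖⌋₊)) ^ (k+1) := by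
    intro x
    have hfx0 : ‖fourierTransformCLM ℂ ψ x‖ ≤ M0 := by
      have := hM0 x
      simpa [norm_iteratedFDeriv_zero] using this
    have hmaxpow : ‖fourierTransformCLM ℂ ψ x‖ * (max 1 ‖x‖) ^ (k+1) ≤ M := by
      rcases max_cases (1:ℝ) ‖x‖ with ⟨hm, hle⟩ | ⟨hm, hlt⟩
      · rw [hm, one_pow, mul_one]
        exact hfx0.trans (le_max_left _ _)
      · rw [hm, mul_comm]
        have := hM1 x
        rw [norm_iteratedFDeriv_zero] at this
        exact this.trans (le_max_right _ _)
    have hple : ((2:ℝ) ^ (Nat.log 2 ⌊‖x‖⌋₊)) ^ (k+1) ≤ (max 1 ‖x‖) ^ (k+1) :=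
      pow_le_pow_left₀ (by positivity) (pow_log_floor_le x) _
    have hstep : ‖fourierTransformCLM ℂ ψ x‖ * ((2:ℝ) ^ (Nat.log 2 ⌊‖x‖⌋₊)) ^ (k+1) ≤ M :=
      le_trans (mul_le_mul_of_nonneg_left hple (norm_nonneg _)) hmaxpow
    have hpow_pos : (0:ℝ) < ((2:ℝ) ^ (Nat.log 2 ⌊‖x‖⌋₊)) ^ (k+1) := by positivity
    rw [← le_div_iff₀ hpow_pos] at hstep
    have heq : M / ((2:ℝ) ^ (Nat.log 2 ⌊‖x‖⌋₊)) ^ (k+1)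
        = M * ((1/2:ℝ) ^ (Nat.log 2 ⌊‖x‖⌋₊)) ^ (k+1) := by
      rw [div_eq_mul_inv, one_div, inv_pow, inv_pow]
    rw [heq] at hstep
    exact hstep
  classical
  set idx : ↥Γ → ℕ := fun g => Nat.log 2 ⌊‖g.1‖⌋₊ with hidx
  set T : ℝ := M * (C * 2 ^ k) with hT
  have hT0 : 0 ≤ T := by positivity
  have hsummaj : Summable (fun n : ℕ => T * (1/2:ℝ) ^ n) := summable_geometric_two.mul_left T
  -- bound on each fiber of a finite set
  have inner_bound : ∀ (u : Finset ↥Γ) (n : ℕ),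
      (∑ g ∈ u.filter (fun g => idx g = n),
        ‖b g.1‖ * ‖fourierTransformCLM ℂ ψ g.1‖) ≤ T * (1/2:ℝ) ^ n := by
    intro u n
    set r : ℝ := 2 ^ (n+1) with hr
    have hr1 : (1:ℝ) ≤ r := one_le_pow₀ (by norm_num)
    obtain ⟨hsb, htb⟩ := hCk r hr1
    have hmem : ∀ g ∈ u.filter (fun g => idx g = n), g.1 ∈ Γ ∩ Metric.ball (0 : Ed d) r := by
      intro g hg
      obtain ⟨hgu, hgn⟩ := Finset.mem_filter.mp hg
      refine ⟨g.2, ?_⟩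
      rw [mem_ball_zero_iff]
      have := norm_lt_pow_log_succ g.1
      rwa [show Nat.log 2 ⌊‖g.1‖⌋₊ = n from hgn] at this
    -- step 1: pull out the decay bound
    have step1 : (∑ g ∈ u.filter (fun g => idx g = n),
        ‖b g.1‖ * ‖fourierTransformCLM ℂ ψ g.1‖)
        ≤ (M * ((1/2:ℝ) ^ n) ^ (k+1)) * ∑ g ∈ u.filter (fun g => idx g = n), ‖b g.1‖ := by
      rw [Finset.mul_sum]
      apply Finset.sum_le_sum
      intro g hg
      obtain ⟨hgu, hgn⟩ := Finset.mem_filter.mp hg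
      have hk := key g.1
      rw [show Nat.log 2 ⌊‖g.1‖⌋₊ = n from hgn] at hk
      calc ‖b g.1‖ * ‖fourierTransformCLM ℂ ψ g.1‖
          ≤ ‖b g.1‖ * (M * ((1/2:ℝ) ^ n) ^ (k+1)) :=
            mul_le_mul_of_nonneg_left hk (norm_nonneg _)
        _ = (M * ((1/2:ℝ) ^ n) ^ (k+1)) * ‖b g.1‖ := by ring
    -- step 2: compare the finite sum of `‖b‖` to the tsum over the ball
    have step2 : (∑ g ∈ u.filter (fun g => idx g = n), ‖b g.1‖)
        ≤ ∑' g : ↥(Γ ∩ Metric.ball (0:Ed d) r), ‖b g.1‖ := by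
      rw [← Finset.tsum_subtype (u.filter (fun g => idx g = n)) (fun g => ‖b g.1‖)]
      refine Summable.tsum_le_tsum_of_inj
        (fun g => (⟨g.1.1, hmem g.1 g.2⟩ : ↥(Γ ∩ Metric.ball (0:Ed d) r)))
        ?_ (fun c _ => norm_nonneg _) (fun g => le_rfl) Summable.of_finite hsb
      intro a c hac
      have h1 : (a.1 : Ed d) = (c.1 : Ed d) := by simpa using hac
      exact Subtype.ext (Subtype.ext h1)
    have hpow : ((1/2:ℝ) ^ n) ^ (k+1) * r ^ k = (2:ℝ) ^ k * (1/2:ℝ) ^ n := by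
      rw [hr, one_div, inv_pow, inv_pow, ← pow_mul, ← pow_mul]
      field_simp
      rw [← pow_add, ← pow_add]
      congr 1
      ring
    calc (∑ g ∈ u.filter (fun g => idx g = n),
          ‖b g.1‖ * ‖fourierTransformCLM ℂ ψ g.1‖)
        ≤ (M * ((1/2:ℝ) ^ n) ^ (k+1)) * ∑ g ∈ u.filter (fun g => idx g = n), ‖b g.1‖ := step1
      _ ≤ (M * ((1/2:ℝ) ^ n) ^ (k+1)) * (C * r ^ k) := by
          have hMn : (0:ℝ) ≤ M * ((1/2:ℝ) ^ n) ^ (k+1) := by positivity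
          exact mul_le_mul_of_nonneg_left (step2.trans htb) hMn
      _ = M * C * (((1/2:ℝ) ^ n) ^ (k+1) * r ^ k) := by ring
      _ = M * C * ((2:ℝ) ^ k * (1/2:ℝ) ^ n) := by rw [hpow]
      _ = T * (1/2:ℝ) ^ n := by rw [hT]; ring
  -- bound on every finite set
  have hbound : ∀ u : Finset ↥Γ,
      (∑ g ∈ u, ‖b g.1‖ * ‖fourierTransformCLM ℂ ψ g.1‖) ≤ T * 2 := by
    intro u
    have hfib := Finset.sum_fiberwise_of_maps_to
      (t := u.image idx) (g := idx) (fun g hg => Finset.mem_image_of_mem idx hg)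
      (fun g => ‖b g.1‖ * ‖fourierTransformCLM ℂ ψ g.1‖)
    rw [← hfib]
    calc (∑ n ∈ u.image idx, ∑ g ∈ u.filter (fun g => idx g = n),
          ‖b g.1‖ * ‖fourierTransformCLM ℂ ψ g.1‖)
        ≤ ∑ n ∈ u.image idx, T * (1/2:ℝ) ^ n :=
          Finset.sum_le_sum fun n _ => inner_bound u n
      _ ≤ ∑' n : ℕ, T * (1/2:ℝ) ^ n :=
          Summable.sum_le_tsum _ (fun n _ => by positivity) hsummaj
      _ = T * ∑' n : ℕ, (1/2:ℝ) ^ n := tsum_mul_left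
      _ = T * 2 := by rw [tsum_geometric_two]
  have hsummable : Summable (fun g : Γ => ‖b g.1‖ * ‖fourierTransformCLM ℂ ψ g.1‖) :=
    summable_of_sum_le (fun g => by positivity) hbound
  refine ⟨hsummable, ?_⟩
  -- Part 2: the convolution identity
  intro s
  set τ : 𝓢(Ed d, ℂ) :=
    SchwartzMap.compCLMOfAntilipschitz ℂ (hasTemperateGrowth_add_const s)
      (antilipschitz_add_const s) ψ with hτ
  have hτx : ∀ x, τ x = ψ (x + s) := fun x => rfl
  have hτc : ⇑τ = ⇑ψ ∘ fun v => v + s := rfl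
  -- double Fourier transform of τ is the reflected translate
  have h1 : ∀ x : Ed d, fourierTransformCLM ℂ (fourierTransformCLM ℂ τ) x = ψ (s - x) := by
    intro x
    have e1 : FourierTransform.fourierInv (FourierTransform.fourier τ) = τ :=
      FourierTransform.fourierInv_fourier_eq τ
    have e2' : FourierTransform.fourierInv (FourierTransform.fourier ⇑τ) = ⇑τ := by
      calc FourierTransform.fourierInv (FourierTransform.fourier ⇑τ)
          = FourierTransform.fourierInv ⇑(FourierTransform.fourier τ) := by
            rw [SchwartzMap.fourier_coe]
        _ = ⇑(FourierTransform.fourierInv (FourierTransform.fourier τ)) :=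
            (SchwartzMap.fourierInv_coe _).symm
        _ = ⇑τ := by rw [e1]
    calc fourierTransformCLM ℂ (fourierTransformCLM ℂ τ) x
        = FourierTransform.fourier (FourierTransform.fourier ⇑τ) x := by
          rfl
      _ = FourierTransform.fourierInv (FourierTransform.fourier ⇑τ) (-x) := by
          rw [Real.fourierInv_eq_fourier_neg, neg_neg]
      _ = τ (-x) := by rw [e2']
      _ = ψ (-x + s) := hτx (-x)
      _ = ψ (s - x) := by rw [neg_add_eq_sub]
  -- Fourier transform of τ is the modulated transform of ψ
  have h2 : ∀ w : Ed d,
      fourierTransformCLM ℂ τ w = e2 s w * fourierTransformCLM ℂ ψ w := by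
    intro w
    have h3 := VectorFourier.fourierIntegral_comp_add_right
      Real.fourierChar (volume : Measure (Ed d)) (innerₗ (Ed d)) ⇑ψ s
    calc fourierTransformCLM ℂ τ w = FourierTransform.fourier ⇑τ w := by
          rfl
      _ = VectorFourier.fourierIntegral Real.fourierChar volume (innerₗ (Ed d))
            (⇑ψ ∘ fun v => v + s) w := by rw [hτc]; rfl
      _ = Real.fourierChar ((innerₗ (Ed d)) s w) • FourierTransform.fourier ⇑ψ w := by
          rw [h3]
          rfl
      _ = e2 s w * fourierTransformCLM ℂ ψ w := by
          simp only [Circle.smul_def, Real.fourierChar_apply,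
            SchwartzMap.fourierTransformCLM_apply]
          congr 1
          rw [e2]
          have : ((innerₗ (Ed d)) s) w = (inner ℝ s w : ℝ) := rfl
          rw [this]
          congr 1
          push_cast
          ring
  calc μ.integral (fun x => ψ (s - x))
      = μ.integral (fun x => fourierTransformCLM ℂ (fourierTransformCLM ℂ τ) x) := by
        unfold CRM.integral
        congr 1
        funext x
        exact congrArg (· * μ.density x) (h1 x).symm
    _ = ∑' g : Γ, b g.1 * (fourierTransformCLM ℂ τ) g.1 := hF (fourierTransformCLM ℂ τ)
    _ = ∑' g : Γ, b g.1 * fourierTransformCLM ℂ ψ g.1 * e2 s g.1 := by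
        apply tsum_congr
        intro g
        rw [h2 g.1]
        ring

end
end

section
/- Let μ=Σ_{λ∈Λ} a_λ δ_λ be an almost periodic complex Radon measure on ℝ^d with uniformly discrete support Λ and with inf_{λ∈Λ}|a_λ| ≥ ε for some ε>0. Then the set Λ is almost periodic, i.e. the measure Σ_{λ∈Λ} δ_λ is almost periodic. -/
open MeasureTheory Metric Complex SchwartzMap Filter Topology

noncomputable section

/-- Auxiliary: ncard of a finite union is at most the sum of the ncards. -/
lemma aux_ncard_biUnion_le {α β : Type*} (t : Finset β) (f : β → Set α) :
    (⋃ c ∈ t, f c).ncard ≤ ∑ c ∈ t, (f c).ncard := by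
  classical
  induction t using Finset.induction_on with
  | empty => simp
  | insert c s hnm ih =>
      rw [Finset.set_biUnion_insert, Finset.sum_insert hnm]
      exact le_trans (Set.ncard_union_le _ _) (by gcongr)

/-- Auxiliary: the index set in the subtype is finite and no larger than the base set. -/
lemma fin_index {d : ℕ} {Λ s : Set (Ed d)} (h : (Λ ∩ s).Finite) :
    {l : ↥Λ | l.1 ∈ s}.Finite ∧ {l : ↥Λ | l.1 ∈ s}.ncard ≤ (Λ ∩ s).ncard := by
  have himg : Subtype.val '' {l : ↥Λ | l.1 ∈ s} ⊆ Λ ∩ s := by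
    rintro y ⟨l, hl, rfl⟩
    exact ⟨l.2, hl⟩
  have hinj : Set.InjOn Subtype.val {l : ↥Λ | l.1 ∈ s} :=
    Subtype.val_injective.injOn
  have hfin : {l : ↥Λ | l.1 ∈ s}.Finite :=
    Set.Finite.of_finite_image (h.subset himg) hinj
  refine ⟨hfin, ?_⟩
  calc {l : ↥Λ | l.1 ∈ s}.ncard
      = (Subtype.val '' {l : ↥Λ | l.1 ∈ s}).ncard := (Set.ncard_image_of_injOn hinj).symm
    _ ≤ (Λ ∩ s).ncard := Set.ncard_le_ncard himg h

/-- Auxiliary: a uniformly separated set meets every ball of radius `ρ` in a uniformly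
bounded number of points. -/
lemma aux_packing {d : ℕ} {Λ : Set (Ed d)} {η : ℝ} (hη : 0 < η)
    (hsep : ∀ x ∈ Λ, ∀ y ∈ Λ, x ≠ y → η ≤ dist x y) (ρ : ℝ) :
    ∃ N : ℕ, ∀ x : Ed d,
      (Λ ∩ Metric.ball x ρ).Finite ∧ (Λ ∩ Metric.ball x ρ).ncard ≤ N := by
  obtain ⟨t, ht⟩ := (isCompact_closedBall (0 : Ed d) ρ).elim_finite_subcover
      (fun c : Ed d => Metric.ball c (η / 3)) (fun _ => Metric.isOpen_ball)
      (fun y _ => Set.mem_iUnion.2 ⟨y, Metric.mem_ball_self (by linarith)⟩)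
  refine ⟨t.card, fun x => ?_⟩
  -- each small ball contains at most one point of Λ
  have hsub : ∀ c : Ed d, ∀ l₁ ∈ Λ, ∀ l₂ ∈ Λ,
      l₁ - x ∈ Metric.ball c (η / 3) → l₂ - x ∈ Metric.ball c (η / 3) → l₁ = l₂ := by
    intro c l₁ h₁ l₂ h₂ hc₁ hc₂
    by_contra hne
    have hd := hsep l₁ h₁ l₂ h₂ hne
    have h12 : dist l₁ l₂ = dist (l₁ - x) (l₂ - x) := by
      rw [dist_eq_norm, dist_eq_norm]
      congr 1
      abel
    have := dist_triangle (l₁ - x) c (l₂ - x)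
    rw [Metric.mem_ball] at hc₁ hc₂
    rw [dist_comm c (l₂ - x)] at this
    rw [h12] at hd
    linarith
  -- the ball is covered by the small balls
  have hcov : Λ ∩ Metric.ball x ρ ⊆
      ⋃ c ∈ t, {l : Ed d | l ∈ Λ ∧ l - x ∈ Metric.ball c (η / 3)} := by
    rintro l ⟨hlΛ, hlb⟩
    have : l - x ∈ Metric.closedBall (0 : Ed d) ρ := by
      rw [Metric.mem_closedBall, dist_zero_right, ← dist_eq_norm]
      exact le_of_lt (Metric.mem_ball.1 hlb)
    have := ht this
    simp only [Set.mem_iUnion] at this ⊢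
    obtain ⟨c, hct, hcb⟩ := this
    exact ⟨c, hct, hlΛ, hcb⟩
  have hsing : ∀ c : Ed d, {l : Ed d | l ∈ Λ ∧ l - x ∈ Metric.ball c (η / 3)}.Subsingleton :=
    fun c l₁ h₁ l₂ h₂ => hsub c l₁ h₁.1 l₂ h₂.1 h₁.2 h₂.2
  have hfinU : (⋃ c ∈ t, {l : Ed d | l ∈ Λ ∧ l - x ∈ Metric.ball c (η / 3)}).Finite :=
    Set.Finite.biUnion t.finite_toSet (fun c _ => (hsing c).finite)
  refine ⟨hfinU.subset hcov, ?_⟩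
  calc (Λ ∩ Metric.ball x ρ).ncard
      ≤ (⋃ c ∈ t, {l : Ed d | l ∈ Λ ∧ l - x ∈ Metric.ball c (η / 3)}).ncard :=
        Set.ncard_le_ncard hcov hfinU
    _ ≤ ∑ c ∈ t, {l : Ed d | l ∈ Λ ∧ l - x ∈ Metric.ball c (η / 3)}.ncard :=
        aux_ncard_biUnion_le t _
    _ ≤ ∑ _c ∈ t, 1 := Finset.sum_le_sum (fun c _ =>
        (Set.ncard_le_one ((hsing c).finite)).2 (fun a ha b hb => hsing c ha hb))
    _ = t.card := by simp

/-- Auxiliary: a function with support contained in a finite set is summable. -/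
lemma summable_of_supp_subset {ι : Type*} {f : ι → ℂ} {s : Set ι} (hs : s.Finite)
    (h : ∀ i, f i ≠ 0 → i ∈ s) : Summable f := by
  refine summable_of_ne_finset_zero (s := hs.toFinset) (fun i hi => ?_)
  by_contra h0
  exact hi (hs.mem_toFinset.2 (h i h0))

/-- Auxiliary: bound for a tsum with finite support. -/
lemma norm_tsum_le_card_mul {ι : Type*} {f : ι → ℂ} {s : Set ι} (hs : s.Finite)
    (h : ∀ i, f i ≠ 0 → i ∈ s) {C : ℝ} (hC : ∀ i, ‖f i‖ ≤ C) :
    ‖∑' i, f i‖ ≤ s.ncard * C := by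
  rw [tsum_eq_sum (s := hs.toFinset) (fun i hi => by
    by_contra h0; exact hi (hs.mem_toFinset.2 (h i h0)))]
  calc ‖∑ i ∈ hs.toFinset, f i‖ ≤ ∑ i ∈ hs.toFinset, ‖f i‖ := norm_sum_le _ _
    _ ≤ ∑ _i ∈ hs.toFinset, C := Finset.sum_le_sum (fun i _ => hC i)
    _ = hs.toFinset.card * C := by rw [Finset.sum_const, nsmul_eq_mul]
    _ = s.ncard * C := by rw [Set.ncard_eq_toFinset_card _ hs]

set_option maxHeartbeats 1000000 in
/-- Lemma 2.7: if `μ = Σ a_λ δ_λ` is an almost periodic measure with uniformly discrete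
support and `|a_λ| ≥ ε > 0`, then the set `Λ` is almost periodic, i.e. `Σ_{λ∈Λ} δ_λ` is an
almost periodic measure. -/
theorem support_almost_periodic {d : ℕ} (Λ : Set (Ed d)) (a : Ed d → ℂ)
    (hud : UniformlyDiscrete Λ) (ε : ℝ) (hε : 0 < ε) (ha : ∀ l ∈ Λ, ε ≤ ‖a l‖)
    (hap : ∀ ψ : C(Ed d, ℂ), HasCompactSupport ψ →
      IsAlmostPeriodicFun (fun x => ∑' l : Λ, a l.1 * ψ (x - l.1))) :
    ∀ ψ : C(Ed d, ℂ), HasCompactSupport ψ →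
      IsAlmostPeriodicFun (fun x => ∑' l : Λ, ψ (x - l.1)) := by
  obtain ⟨η, hη, hsep⟩ := hud
  intro ψ hψc
  -- a radius for the support of ψ
  obtain ⟨R0, hR0⟩ := hψc.isBounded.subset_closedBall 0
  set R : ℝ := max R0 0 with hRdef
  have hR : 0 ≤ R := le_max_right _ _
  have hψ0 : ∀ u : Ed d, ψ u ≠ 0 → ‖u‖ ≤ R := by
    intro u hu
    have : u ∈ tsupport ψ := subset_closure hu
    have := hR0 this
    rw [Metric.mem_closedBall, dist_zero_right] at this
    exact le_trans this (le_max_left _ _)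
  -- uniform counting bound
  obtain ⟨N, hN⟩ := aux_packing hη hsep (R + 2)
  constructor
  · -- continuity
    rw [continuous_iff_continuousAt]
    intro x₀
    have hfin : {l : ↥Λ | l.1 ∈ Metric.ball x₀ (R + 2)}.Finite := (fin_index (hN x₀).1).1
    set F : Finset ↥Λ := hfin.toFinset with hFdef
    have hmem : ∀ x ∈ Metric.ball x₀ 1, ∀ l : ↥Λ, ψ (x - l.1) ≠ 0 → l ∈ F := by
      intro x hx l h0
      rw [hFdef, Set.Finite.mem_toFinset]
      simp only [Set.mem_setOf_eq]
      have h1 : ‖x - l.1‖ ≤ R := hψ0 _ h0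
      have h2 : dist l.1 x ≤ R := by rw [dist_comm, dist_eq_norm]; exact h1
      have h3 : dist x x₀ < 1 := Metric.mem_ball.1 hx
      have : dist l.1 x₀ < R + 2 :=
        lt_of_le_of_lt (dist_triangle l.1 x x₀) (by linarith)
      exact Metric.mem_ball.2 this
    have hcongr : ∀ x ∈ Metric.ball x₀ 1,
        (∑' l : Λ, (ψ (x - l.1) : ℂ)) = ∑ l ∈ F, ψ (x - l.1) := by
      intro x hx
      refine tsum_eq_sum (fun l hl => ?_)
      by_contra h0
      exact hl (hmem x hx l h0)
    have hFc : Continuous (fun x : Ed d => ∑ l ∈ F, (ψ (x - l.1) : ℂ)) :=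
      continuous_finset_sum _ (fun l _ =>
        ψ.continuous.comp (continuous_id.sub continuous_const))
    refine hFc.continuousAt.congr ?_
    filter_upwards [Metric.ball_mem_nhds x₀ one_pos] with x hx
    exact (hcongr x hx).symm
  · -- relatively dense almost-periods
    intro ε' hε'
    have hN1 : (0 : ℝ) < N + 1 := by positivity
    set εp : ℝ := ε' / (N + 1) with hεpdef
    have hεp : 0 < εp := by positivity
    -- uniform continuity of ψ
    have huc : UniformContinuous (ψ : Ed d → ℂ) :=
      hψc.uniformContinuous_of_continuous ψ.continuous
    obtain ⟨δ₀, hδ₀, hδ₀c⟩ := Metric.uniformContinuous_iff.1 huc εp hεp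
    set δ : ℝ := min δ₀ (min (η / 2) 1) with hδdef
    have hδ : 0 < δ := lt_min hδ₀ (lt_min (by linarith) one_pos)
    have hδδ₀ : δ ≤ δ₀ := min_le_left _ _
    have hδη : 2 * δ ≤ η := by
      have : δ ≤ η / 2 := le_trans (min_le_right _ _) (min_le_left _ _)
      linarith
    have hδ1 : δ ≤ 1 := le_trans (min_le_right _ _) (min_le_right _ _)
    -- the tent bump function
    set φ : C(Ed d, ℂ) := ⟨fun u => ((max 0 (1 - ‖u‖ / δ) : ℝ) : ℂ),
      Complex.continuous_ofReal.comp
        (continuous_const.max ((continuous_const.sub (continuous_norm.div_const δ))))⟩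
      with hφdef
    have hφsupp : ∀ u : Ed d, δ ≤ ‖u‖ → φ u = 0 := by
      intro u hu
      have h1 : 1 - ‖u‖ / δ ≤ 0 := by
        have : 1 ≤ ‖u‖ / δ := (one_le_div hδ).2 hu
        linarith
      simp only [hφdef, ContinuousMap.coe_mk]
      rw [max_eq_left h1]
      simp
    have hφ0 : φ 0 = 1 := by
      simp [hφdef]
    have hφc : HasCompactSupport (φ : Ed d → ℂ) := by
      refine HasCompactSupport.intro (isCompact_closedBall 0 δ) (fun u hu => ?_)
      apply hφsupp
      rw [Metric.mem_closedBall, dist_zero_right, not_le] at hu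
      exact le_of_lt hu
    obtain ⟨Rt, hRt⟩ := (hap φ hφc).2 (ε / 2) (half_pos hε)
    refine ⟨Rt, fun z => ?_⟩
    obtain ⟨τ, hτT, hτd⟩ := hRt z
    simp only [Set.mem_setOf_eq] at hτT
    refine ⟨τ, ?_, hτd⟩
    set Fφ : Ed d → ℂ := fun v => ∑' l : Λ, a l.1 * φ (v - l.1) with hFφdef
    have hτT' : ∀ x : Ed d, ‖Fφ (x + τ) - Fφ x‖ < ε / 2 := hτT
    -- value of Fφ at the lattice points
    have hval : ∀ l : ↥Λ, Fφ l.1 = a l.1 := by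
      intro l
      have hz : ∀ l' : ↥Λ, l' ≠ l → a l'.1 * φ (l.1 - l'.1) = 0 := by
        intro l' hne
        have hne' : l.1 ≠ l'.1 := fun h => hne (Subtype.ext h.symm)
        have hd : η ≤ dist l.1 l'.1 := hsep _ l.2 _ l'.2 hne'
        rw [dist_eq_norm] at hd
        rw [hφsupp _ (by linarith), mul_zero]
      calc Fφ l.1 = ∑' l' : Λ, a l'.1 * φ (l.1 - l'.1) := rfl
        _ = a l.1 * φ (l.1 - l.1) := tsum_eq_single l hz
        _ = a l.1 := by rw [sub_self, hφ0, mul_one]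
    -- a big value of Fφ forces a nearby lattice point
    have hnear : ∀ v : Ed d, ε / 2 < ‖Fφ v‖ → ∃ l : ↥Λ, dist v l.1 < δ := by
      intro v hv
      by_contra hcon
      push_neg at hcon
      have hz : Fφ v = 0 := by
        rw [hFφdef]
        have h0 : ∀ l : ↥Λ, a l.1 * φ (v - l.1) = 0 := by
          intro l
          have : δ ≤ ‖v - l.1‖ := by
            have := hcon l
            rw [dist_eq_norm] at this
            exact this
          rw [hφsupp _ this, mul_zero]
        simp only [h0, tsum_zero]
      rw [hz] at hv
      simp at hv
      linarith
    -- existence of a lattice point near λ + τ, for each λ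
    have hex : ∀ l : ↥Λ, ∃ l' : ↥Λ, dist (l.1 + τ) l'.1 < δ := by
      intro l
      apply hnear
      have h1 := hτT' l.1
      have h2 : ‖Fφ l.1‖ = ‖a l.1‖ := by rw [hval]
      have h3 : ε ≤ ‖a l.1‖ := ha _ l.2
      have h4 := norm_sub_norm_le (Fφ l.1) (Fφ (l.1 + τ))
      have h5 : ‖Fφ l.1 - Fφ (l.1 + τ)‖ = ‖Fφ (l.1 + τ) - Fφ l.1‖ := norm_sub_rev _ _
      linarith
    -- existence of a lattice point near λ' - τ, for each λ'
    have hexr : ∀ l' : ↥Λ, ∃ l : ↥Λ, dist (l.1 + τ) l'.1 < δ := by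
      intro l'
      have h5 : ∃ l : ↥Λ, dist (l'.1 - τ) l.1 < δ := by
        apply hnear
        have h1 := hτT' (l'.1 - τ)
        rw [sub_add_cancel] at h1
        have h2 : ‖Fφ l'.1‖ = ‖a l'.1‖ := by rw [hval]
        have h3 : ε ≤ ‖a l'.1‖ := ha _ l'.2
        have h4 := norm_sub_norm_le (Fφ l'.1) (Fφ (l'.1 - τ))
        linarith
      obtain ⟨l, hl⟩ := h5
      refine ⟨l, ?_⟩
      rw [dist_eq_norm] at hl ⊢
      have heq : l.1 + τ - l'.1 = -(l'.1 - τ - l.1) := by abel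
      rw [heq, norm_neg]
      exact hl
    -- uniqueness of the nearby lattice point
    have huniq : ∀ (v : Ed d) (l₁ l₂ : ↥Λ),
        dist v l₁.1 < δ → dist v l₂.1 < δ → l₁ = l₂ := by
      intro v l₁ l₂ h1 h2
      by_contra hne
      have hne' : l₁.1 ≠ l₂.1 := fun h => hne (Subtype.ext h)
      have hd := hsep _ l₁.2 _ l₂.2 hne'
      have h3 : dist l₁.1 l₂.1 ≤ dist l₁.1 v + dist v l₂.1 := dist_triangle _ _ _
      rw [dist_comm l₁.1 v] at h3
      linarith
    choose σ hσ using hex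
    have hinj : Function.Injective σ := by
      intro l₁ l₂ h
      have h1 := hσ l₁
      have h2 := hσ l₂
      rw [h] at h1
      by_contra hne
      have hne' : l₁.1 + τ ≠ l₂.1 + τ := by
        intro hc
        exact hne (Subtype.ext (by
          have := congrArg (fun w => w - τ) hc
          simpa using this))
      have hne'' : l₁.1 ≠ l₂.1 := fun h => hne (Subtype.ext h)
      have hd := hsep _ l₁.2 _ l₂.2 hne''
      have h3 : dist l₁.1 l₂.1 = dist (l₁.1 + τ) (l₂.1 + τ) := (dist_add_right _ _ _).symm
      have h4 : dist (l₁.1 + τ) (l₂.1 + τ) ≤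
          dist (l₁.1 + τ) (σ l₂).1 + dist (σ l₂).1 (l₂.1 + τ) := dist_triangle _ _ _
      rw [dist_comm (σ l₂).1 (l₂.1 + τ)] at h4
      linarith
    have hsurj : Function.Surjective σ := by
      intro l'
      obtain ⟨l, hl⟩ := hexr l'
      exact ⟨l, huniq (l.1 + τ) (σ l) l' (hσ l) hl⟩
    have hbij : Function.Bijective σ := ⟨hinj, hsurj⟩
    intro x
    simp only
    -- reindex the translated sum by σ
    have hre : (∑' l : Λ, (ψ (x + τ - l.1) : ℂ)) = ∑' l : Λ, (ψ (x + τ - (σ l).1) : ℂ) :=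
      ((Equiv.ofBijective σ hbij).tsum_eq (fun l : ↥Λ => (ψ (x + τ - l.1) : ℂ))).symm
    -- the support control
    have hfin : {l : ↥Λ | l.1 ∈ Metric.ball x (R + 2)}.Finite := (fin_index (hN x).1).1
    have hncard : {l : ↥Λ | l.1 ∈ Metric.ball x (R + 2)}.ncard ≤ N :=
      le_trans (fin_index (hN x).1).2 (hN x).2
    have hsupp1 : ∀ l : ↥Λ, (ψ (x - l.1) : ℂ) ≠ 0 → l ∈ {l : ↥Λ | l.1 ∈ Metric.ball x (R + 2)} := by
      intro l h0
      have h1 : ‖x - l.1‖ ≤ R := hψ0 _ h0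
      have h2 : dist l.1 x ≤ R := by rw [dist_comm, dist_eq_norm]; exact h1
      simp only [Set.mem_setOf_eq]
      exact Metric.mem_ball.2 (by linarith)
    have hdistστ : ∀ l : ↥Λ, dist (x + τ - (σ l).1) (x - l.1) < δ := by
      intro l
      have h1 := hσ l
      rw [dist_eq_norm] at h1 ⊢
      have heq : x + τ - (σ l).1 - (x - l.1) = l.1 + τ - (σ l).1 := by abel
      rw [heq]
      exact h1
    have hsupp2 : ∀ l : ↥Λ, (ψ (x + τ - (σ l).1) : ℂ) ≠ 0 →
        l ∈ {l : ↥Λ | l.1 ∈ Metric.ball x (R + 2)} := by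
      intro l h0
      have h1 : ‖x + τ - (σ l).1‖ ≤ R := hψ0 _ h0
      have h2 : dist (x + τ - (σ l).1) (x - l.1) < δ := hdistστ l
      have h3 : dist (x - l.1) 0 ≤ dist (x - l.1) (x + τ - (σ l).1) + dist (x + τ - (σ l).1) 0 :=
        dist_triangle _ _ _
      rw [dist_comm (x - l.1) (x + τ - (σ l).1)] at h3
      rw [dist_zero_right, dist_zero_right] at h3
      have h4 : ‖x - l.1‖ < δ + R := by linarith
      have h5 : dist l.1 x < δ + R := by rw [dist_comm, dist_eq_norm]; exact h4
      simp only [Set.mem_setOf_eq]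
      exact Metric.mem_ball.2 (by linarith)
    have hs2 : Summable (fun l : ↥Λ => (ψ (x - l.1) : ℂ)) :=
      summable_of_supp_subset hfin hsupp1
    have hs1 : Summable (fun l : ↥Λ => (ψ (x + τ - (σ l).1) : ℂ)) :=
      summable_of_supp_subset hfin hsupp2
    have hsub : (∑' l : Λ, (ψ (x + τ - (σ l).1) : ℂ)) - (∑' l : Λ, (ψ (x - l.1) : ℂ))
        = ∑' l : Λ, ((ψ (x + τ - (σ l).1) : ℂ) - ψ (x - l.1)) := (Summable.tsum_sub hs1 hs2).symm
    have hterm : ∀ l : ↥Λ, ‖(ψ (x + τ - (σ l).1) : ℂ) - ψ (x - l.1)‖ ≤ εp := by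
      intro l
      have h1 : dist (x + τ - (σ l).1) (x - l.1) < δ₀ := lt_of_lt_of_le (hdistστ l) hδδ₀
      have h2 := hδ₀c h1
      rw [dist_eq_norm] at h2
      exact le_of_lt h2
    have hsuppd : ∀ l : ↥Λ, ((ψ (x + τ - (σ l).1) : ℂ) - ψ (x - l.1)) ≠ 0 →
        l ∈ {l : ↥Λ | l.1 ∈ Metric.ball x (R + 2)} := by
      intro l h0
      by_cases h1 : (ψ (x - l.1) : ℂ) ≠ 0
      · exact hsupp1 l h1
      · push_neg at h1
        apply hsupp2 l
        intro h2
        rw [h1, h2, sub_zero] at h0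
        exact h0 rfl
    have hbound : ‖∑' l : Λ, ((ψ (x + τ - (σ l).1) : ℂ) - ψ (x - l.1))‖ ≤
        ({l : ↥Λ | l.1 ∈ Metric.ball x (R + 2)}.ncard : ℝ) * εp :=
      norm_tsum_le_card_mul hfin hsuppd hterm
    calc ‖(∑' l : Λ, (ψ (x + τ - l.1) : ℂ)) - ∑' l : Λ, (ψ (x - l.1) : ℂ)‖
        = ‖∑' l : Λ, ((ψ (x + τ - (σ l).1) : ℂ) - ψ (x - l.1))‖ := by rw [hre, hsub]
      _ ≤ ({l : ↥Λ | l.1 ∈ Metric.ball x (R + 2)}.ncard : ℝ) * εp := hbound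
      _ ≤ (N : ℝ) * εp := by
          apply mul_le_mul_of_nonneg_right _ (le_of_lt hεp)
          exact_mod_cast hncard
      _ < ε' := by
          rw [hεpdef]
          rw [mul_div_assoc']
          rw [div_lt_iff₀ hN1]
          have : (N : ℝ) < N + 1 := by linarith
          calc (N : ℝ) * ε' < (N + 1) * ε' := by
                apply mul_lt_mul_of_pos_right this hε'
            _ = ε' * (N + 1) := by ring

end
end

section
/- Let μ=Σ_{λ∈Λ} a_λ δ_λ be a complex atomic measure on ℝ^d with uniformly discrete support Λ which is a tempered distribution, and suppose its Fourier transform μ̂ is a slowly increasing measure. Then sup_{λ∈Λ}|a_λ|<∞, and consequently the measure μ is translation bounded. -/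
open MeasureTheory Metric Complex SchwartzMap Filter Topology

noncomputable section

open scoped FourierTransform ContDiff ENNReal NNReal

/-- A smooth compactly supported function is a Schwartz function. -/
def schwartzOfCompactSupport {d : ℕ} (f : Ed d → ℂ) (h1 : ContDiff ℝ ∞ f)
    (h2 : HasCompactSupport f) : 𝓢(Ed d, ℂ) where
  toFun := f
  smooth' := h1
  decay' := by
    intro k n
    have hc : Continuous fun x : Ed d => ‖x‖ ^ k * ‖iteratedFDeriv ℝ n f x‖ :=
      ((continuous_norm.pow k)).mul
        ((h1.continuous_iteratedFDeriv (by exact_mod_cast le_top)).norm)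
    have hs : HasCompactSupport fun x : Ed d => ‖x‖ ^ k * ‖iteratedFDeriv ℝ n f x‖ :=
      ((h2.iteratedFDeriv n).norm).mul_left
    obtain ⟨C, hC⟩ := hs.exists_bound_of_continuous hc
    refine ⟨C, fun x => ?_⟩
    calc ‖x‖ ^ k * ‖iteratedFDeriv ℝ n f x‖
        ≤ ‖‖x‖ ^ k * ‖iteratedFDeriv ℝ n f x‖‖ := le_abs_self _
      _ ≤ C := hC x

/-- Lemma 2.8: a uniformly discrete atomic measure `μ = Σ a_λ δ_λ` which is a tempered
distribution with slowly increasing Fourier transform has bounded masses, and consequently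
is translation bounded. -/
theorem masses_bounded {d : ℕ} (Λ : Set (Ed d)) (a : Ed d → ℂ) (hΛ : Λ.Countable)
    (hud : UniformlyDiscrete Λ)
    (hT : ∀ ψ : 𝓢(Ed d, ℂ), Summable (fun l : Λ => ‖a l.1‖ * ‖ψ l.1‖))
    (ν : CRM d) (hSI : ν.SlowlyIncreasing)
    (hF : ∀ ψ : 𝓢(Ed d, ℂ),
      ν.integral (fun x => ψ x) = ∑' l : Λ, a l.1 * fourierTransformCLM ℂ ψ l.1) :
    (∃ M : ℝ, ∀ l ∈ Λ, ‖a l‖ ≤ M) ∧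
    ∃ C : ℝ, ∀ x : Ed d,
      Summable (fun l : ↥(Λ ∩ Metric.ball x 1) => ‖a l.1‖) ∧
      (∑' l : ↥(Λ ∩ Metric.ball x 1), ‖a l.1‖) ≤ C := by
  classical
  obtain ⟨ε, hε, hsep⟩ := hud
  -- a bump function supported in `ball 0 (ε/2)`, equal to 1 at the origin
  let bump : ContDiffBump (0 : Ed d) :=
    ⟨ε / 4, ε / 2, by positivity, by linarith⟩
  let f₀ : Ed d → ℂ := fun y => ((bump y : ℝ) : ℂ)
  let M : ℝ := ∫ x, ‖𝓕⁻ f₀ x‖ ∂ν.var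
  have hM0 : 0 ≤ M := integral_nonneg fun _ => norm_nonneg _
  -- the masses are bounded by `M`
  have hM : ∀ l ∈ Λ, ‖a l‖ ≤ M := by
    intro l0 hl0
    let fl : Ed d → ℂ := fun y => ((bump (y - l0) : ℝ) : ℂ)
    have hsmooth : ContDiff ℝ ∞ fl :=
      Complex.ofRealCLM.contDiff.comp (bump.contDiff.comp (contDiff_id.sub contDiff_const))
    have hsupp : HasCompactSupport fl := by
      refine HasCompactSupport.intro (isCompact_closedBall l0 (ε / 2)) fun y hy => ?_
      have hd : bump.rOut ≤ dist (y - l0) 0 := by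
        rw [dist_zero_right, ← dist_eq_norm]
        simpa [bump] using le_of_not_ge (fun h => hy (mem_closedBall.2 h))
      simp [fl, bump.zero_of_le_dist hd]
    let Gl : 𝓢(Ed d, ℂ) := schwartzOfCompactSupport fl hsmooth hsupp
    let psil : 𝓢(Ed d, ℂ) := (fourierTransformCLE ℂ (𝓢(Ed d, ℂ))).symm Gl
    have hψcoe : ∀ t, psil t = 𝓕⁻ fl t := fun t =>
      congrFun ((congrArg DFunLike.coe (fourierTransformCLE_symm_apply (R := ℂ) (E := 𝓢(Ed d, ℂ)) Gl)).trans
        (SchwartzMap.fourierInv_coe Gl)) t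
    have hhat : ∀ y, fourierTransformCLM ℂ psil y = fl y := by
      intro y
      calc fourierTransformCLM ℂ psil y = (fourierTransformCLE ℂ (𝓢(Ed d, ℂ))) psil y := rfl
        _ = Gl y := by rw [(fourierTransformCLE ℂ (𝓢(Ed d, ℂ))).apply_symm_apply]
        _ = fl y := rfl
    -- the tsum collapses to `a l0`
    have hsum_eq : (∑' l : Λ, a l.1 * fourierTransformCLM ℂ psil l.1) = a l0 := by
      rw [tsum_eq_single (⟨l0, hl0⟩ : Λ) ?_]
      · have h1 : fl l0 = 1 := by
          show ((bump (l0 - l0) : ℝ) : ℂ) = 1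
          rw [sub_self, bump.one_of_mem_closedBall (mem_closedBall_self (by positivity)),
            Complex.ofReal_one]
        rw [hhat, h1, mul_one]
      · intro l hl
        have hne : (l : Ed d) ≠ l0 := fun h => hl (Subtype.ext h)
        have h0 : bump ((l : Ed d) - l0) = 0 := by
          refine bump.zero_of_le_dist ?_
          rw [dist_zero_right, ← dist_eq_norm]
          have := hsep l l.2 l0 hl0 hne
          show ε / 2 ≤ _
          linarith
        rw [hhat]
        simp [fl, h0]
    -- `‖psil x‖ = ‖𝓕⁻ f₀ x‖`
    have hnormeq : ∀ t, ‖psil t‖ = ‖𝓕⁻ f₀ t‖ := by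
      intro t
      have hcomp : fl = f₀ ∘ fun v => v + (-l0) := by
        funext v; simp [fl, f₀, sub_eq_add_neg]
      rw [hψcoe t, hcomp]
      have h := VectorFourier.fourierIntegral_comp_add_right 𝐞 (volume : Measure (Ed d))
        (-innerₗ (Ed d)) f₀ (-l0)
      rw [show (𝓕⁻ (f₀ ∘ fun v => v + (-l0)))
            = VectorFourier.fourierIntegral 𝐞 volume (-innerₗ (Ed d))
                (f₀ ∘ fun v => v + (-l0)) from rfl, h]
      rw [Circle.norm_smul]
      rfl
    have key : a l0 = ν.integral (fun x => psil x) := by rw [hF psil, hsum_eq]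
    calc ‖a l0‖ = ‖∫ x, psil x * ν.density x ∂ν.var‖ := by rw [key]; rfl
      _ ≤ ∫ x, ‖psil x * ν.density x‖ ∂ν.var := norm_integral_le_integral_norm _
      _ = M := by
          refine integral_congr_ae ?_
          filter_upwards [ν.unit_density] with t ht
          rw [norm_mul, ht, mul_one, hnormeq t]
  refine ⟨⟨M, hM⟩, ?_⟩
  -- packing constant
  set v : ℝ≥0∞ := volume (Metric.ball (0 : Ed d) (ε / 2)) with hv
  set Vb : ℝ≥0∞ := volume (Metric.ball (0 : Ed d) (1 + ε / 2)) with hVb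
  have hv0 : v ≠ 0 := (measure_ball_pos volume 0 (by positivity)).ne'
  have hvtop : v ≠ ⊤ := measure_ball_lt_top.ne
  have hVbtop : Vb ≠ ⊤ := measure_ball_lt_top.ne
  set N : ℝ := (Vb / v).toReal with hN
  have key : ∀ (x : Ed d) (F : Finset (Ed d)), ↑F ⊆ Λ ∩ Metric.ball x 1 →
      (F.card : ℝ) ≤ N := by
    intro x F hFs
    have hdisj : (F : Set (Ed d)).PairwiseDisjoint fun l => Metric.ball l (ε / 2) := by
      intro p hp q hq hpq
      exact ball_disjoint_ball (by
        have := hsep p (hFs hp).1 q (hFs hq).1 hpq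
        linarith)
    have hunion : (⋃ l ∈ F, Metric.ball l (ε / 2)) ⊆ Metric.ball x (1 + ε / 2) := by
      intro y hy
      simp only [Set.mem_iUnion, exists_prop] at hy
      obtain ⟨l, hl, hyl⟩ := hy
      have h1 : dist l x < 1 := mem_ball.1 (hFs hl).2
      have h2 : dist y l < ε / 2 := mem_ball.1 hyl
      exact mem_ball.2 (lt_of_le_of_lt (dist_triangle y l x) (by linarith))
    have hcard : (F.card : ℝ≥0∞) * v ≤ Vb := by
      have heach : ∀ l ∈ F, volume (Metric.ball l (ε / 2)) = v := fun l _ =>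
        Measure.addHaar_ball_center volume l _
      calc (F.card : ℝ≥0∞) * v = ∑ l ∈ F, volume (Metric.ball l (ε / 2)) := by
            rw [Finset.sum_congr rfl heach, Finset.sum_const, nsmul_eq_mul]
        _ = volume (⋃ l ∈ F, Metric.ball l (ε / 2)) :=
            (measure_biUnion_finset hdisj fun l _ => measurableSet_ball).symm
        _ ≤ volume (Metric.ball x (1 + ε / 2)) := measure_mono hunion
        _ = Vb := Measure.addHaar_ball_center volume x _
    have hle : (F.card : ℝ≥0∞) ≤ Vb / v :=
      (ENNReal.le_div_iff_mul_le (Or.inl hv0) (Or.inl hvtop)).2 hcard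
    have hdivtop : Vb / v ≠ ⊤ := (ENNReal.div_lt_top hVbtop hv0).ne
    calc (F.card : ℝ) = ((F.card : ℝ≥0∞)).toReal := by simp
      _ ≤ (Vb / v).toReal := ENNReal.toReal_mono hdivtop hle
  -- every unit ball meets `Λ` in finitely many points
  have hfin : ∀ x : Ed d, (Λ ∩ Metric.ball x 1).Finite := by
    intro x
    by_contra hinf
    have hinf' : (Λ ∩ Metric.ball x 1).Infinite := hinf
    obtain ⟨F, hFs, hFc⟩ := hinf'.exists_subset_card_eq (⌈N⌉₊ + 1)
    have h1 := key x F hFs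
    rw [hFc] at h1
    have h2 := Nat.le_ceil N
    push_cast at h1
    linarith
  refine ⟨N * M, fun x => ?_⟩
  haveI : Finite ↥(Λ ∩ Metric.ball x 1) := (hfin x).to_subtype
  have hsummable : Summable fun l : ↥(Λ ∩ Metric.ball x 1) => ‖a l.1‖ :=
    Summable.of_finite
  refine ⟨hsummable, ?_⟩
  refine Summable.tsum_le_of_sum_le hsummable fun s => ?_
  set s' : Finset (Ed d) := s.image Subtype.val with hs'
  have hsub : ↑s' ⊆ Λ ∩ Metric.ball x 1 := by
    intro y hy
    simp only [hs', Finset.coe_image, Set.mem_image, Finset.mem_coe] at hy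
    obtain ⟨l, _, rfl⟩ := hy
    exact l.2
  have hsum : ∑ l ∈ s, ‖a l.1‖ = ∑ y ∈ s', ‖a y‖ := by
    rw [hs', Finset.sum_image (fun p _ q _ h => Subtype.val_injective h)]
  rw [hsum]
  calc ∑ y ∈ s', ‖a y‖ ≤ s'.card • M :=
        Finset.sum_le_card_nsmul s' _ M fun y hy => hM y (hsub hy).1
    _ = (s'.card : ℝ) * M := nsmul_eq_mul _ _
    _ ≤ N * M := mul_le_mul_of_nonneg_right (key x s' hsub) hM0


end
end
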